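/- Let T[Θ](x) = ∫_{ℝ²} Θ(x − h) K(h) dh be a convolution operator acting on smooth periodic functions Θ: 𝕋² → ℂ, where the kernel K: ℝ² → ℂ is a Schwartz function. Let ξ: 𝕋² → ℝ and θ: 𝕋² → ℂ be smooth periodic functions and let λ ∈ ℤ. Then for the input Θ(x) = e^{iλξ(x)} θ(x) one has the exact formula T[Θ](x) = e^{iλξ(x)} ( θ(x) K̂(λ∇ξ(x)) + δ(x) ), where K̂(ζ) = ∫_{ℝ²} e^{−iζ·h} K(h) dh and the error term is given explicitly by δ(x) = ∫₀¹ dr (d/dr) ∫_{ℝ²} e^{−iλ∇ξ(x)·h} e^{iZ(r,x,h)} θ(x − rh) K(h) dh, with Z(r,x,h) = rλ ∫₀¹ h^a h^b ∂_a∂_b ξ(x − sh)(1 − s) ds. -/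

import Mathlib

open MeasureTheory

noncomputable section

/-- `ℤ²`-periodicity. -/
def ZPer {α : Type*} (f : (Fin 2 → ℝ) → α) : Prop :=
  ∀ (k : Fin 2 → ℤ) (x : Fin 2 → ℝ), f (x + fun i => (k i : ℝ)) = f x

/-- the convolution operator `T[Θ](x) = ∫ Θ(x-h) K(h) dh`. -/
def convOp (K : (Fin 2 → ℝ) → ℂ) (Θ : (Fin 2 → ℝ) → ℂ) (x : Fin 2 → ℝ) : ℂ :=
  ∫ h : Fin 2 → ℝ, Θ (x - h) * K h

/-- the Fourier transform `K̂(ζ) = ∫ e^{-iζ·h} K(h) dh`. -/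
def Khat (K : (Fin 2 → ℝ) → ℂ) (ζ : Fin 2 → ℝ) : ℂ :=
  ∫ h : Fin 2 → ℝ, Complex.exp (-(Complex.I * (∑ i, (ζ i : ℂ) * (h i : ℂ)))) * K h

/-- the gradient vector `∇ξ(x)`. -/
def gradv (ξ : (Fin 2 → ℝ) → ℝ) (x : Fin 2 → ℝ) : Fin 2 → ℝ :=
  fun i => fderiv ℝ ξ x (Pi.single i 1)

/-- the second partial derivative `∂_a ∂_b ξ(y)`. -/
def d2 (ξ : (Fin 2 → ℝ) → ℝ) (y : Fin 2 → ℝ) (a b : Fin 2) : ℝ :=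
  fderiv ℝ (fun z => fderiv ℝ ξ z (Pi.single b 1)) y (Pi.single a 1)

/-- the phase correction `Z(r,x,h) = rλ ∫₀¹ hᵃhᵇ ∂_a∂_b ξ(x-sh)(1-s) ds`. -/
def Zfun (ξ : (Fin 2 → ℝ) → ℝ) (lam : ℤ) (r : ℝ) (x h : Fin 2 → ℝ) : ℝ :=
  r * (lam : ℝ) *
    ∫ s in (0:ℝ)..1, (∑ a, ∑ b, h a * h b * d2 ξ (x - s • h) a b) * (1 - s)

/-- the explicit error term `δ[TΘ](x)` of the Microlocal Lemma. -/
def microlocalError (K : (Fin 2 → ℝ) → ℂ) (ξ : (Fin 2 → ℝ) → ℝ)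
    (θ : (Fin 2 → ℝ) → ℂ) (lam : ℤ) (x : Fin 2 → ℝ) : ℂ :=
  ∫ r in (0:ℝ)..1,
    deriv (fun ρ : ℝ =>
      ∫ h : Fin 2 → ℝ,
        Complex.exp (-(Complex.I * (lam : ℂ) * (∑ i, (gradv ξ x i : ℂ) * (h i : ℂ)))) *
          Complex.exp (Complex.I * (Zfun ξ lam ρ x h : ℂ)) * θ (x - ρ • h) * K h) r

/-! ### Auxiliary lemmas -/

lemma sum_single' (u : Fin 2 → ℝ) : ∑ i, u i • (Pi.single i (1:ℝ) : Fin 2 → ℝ) = u := by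
  have := Finset.univ_sum_single u
  rw [← this]; congr 1; funext i; funext j
  by_cases h : j = i <;> simp [Pi.single_apply, h]

lemma bilin_expand (B : (Fin 2 → ℝ) →L[ℝ] (Fin 2 → ℝ) →L[ℝ] ℝ) (u v : Fin 2 → ℝ) :
    B u v = ∑ a, ∑ b, u a * v b * B (Pi.single a 1) (Pi.single b 1) := by
  conv_lhs => rw [← sum_single' u, ← sum_single' v]
  rw [map_sum]
  simp only [ContinuousLinearMap.coe_sum', Finset.sum_apply, _root_.map_smul, map_sum,
    ContinuousLinearMap.coe_smul', Pi.smul_apply, smul_eq_mul]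
  rw [Finset.sum_comm]
  apply Finset.sum_congr rfl; intro a _
  rw [Finset.mul_sum]
  apply Finset.sum_congr rfl; intro b _; ring

lemma lin_expand (B : (Fin 2 → ℝ) →L[ℝ] ℝ) (u : Fin 2 → ℝ) :
    B u = ∑ b, u b * B (Pi.single b 1) := by
  conv_lhs => rw [← sum_single' u]
  simp [map_sum, _root_.map_smul]

lemma top_add_one_le : ((⊤ : ℕ∞) : WithTop ℕ∞) + 1 ≤ ((⊤ : ℕ∞) : WithTop ℕ∞) := by
  exact_mod_cast le_top

/-- A continuous periodic function is bounded. -/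
lemma zper_bounded {E : Type*} [NormedAddCommGroup E] {f : (Fin 2 → ℝ) → E}
    (hf : Continuous f) (hp : ZPer f) : ∃ M : ℝ, 0 ≤ M ∧ ∀ y, ‖f y‖ ≤ M := by
  obtain ⟨M, hM⟩ := (isCompact_Icc (a := (0 : Fin 2 → ℝ)) (b := 1)).exists_bound_of_continuousOn
    hf.continuousOn
  refine ⟨max M 0, le_max_right _ _, fun y => ?_⟩
  have key : f ((fun i => Int.fract (y i)) + fun i => ((⌊y i⌋ : ℤ) : ℝ)) = f (fun i => Int.fract (y i)) :=
    hp (fun i => ⌊y i⌋) (fun i => Int.fract (y i))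
  have hy : y = (fun i => Int.fract (y i)) + fun i => ((⌊y i⌋ : ℤ) : ℝ) := by
    funext i; simp only [Pi.add_apply]; rw [Int.fract]; ring
  rw [hy, key]
  refine le_trans (hM _ ?_) (le_max_left _ _)
  constructor <;> intro i
  · exact (Int.fract_nonneg _)
  · exact le_of_lt (Int.fract_lt_one _)

/-- periodicity of the derivative. -/
lemma zper_fderiv {E : Type*} [NormedAddCommGroup E] [NormedSpace ℝ E]
    {f : (Fin 2 → ℝ) → E} (hf : Differentiable ℝ f) (hp : ZPer f) :
    ZPer (fun y => fderiv ℝ f y) := by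
  intro k y
  have hcomp : (fun z : Fin 2 → ℝ => f (z + fun i => ((k i : ℤ) : ℝ))) = f := funext (hp k)
  have hd : HasFDerivAt (fun z : Fin 2 → ℝ => z + fun i => ((k i : ℤ) : ℝ))
      (ContinuousLinearMap.id ℝ _) y := (hasFDerivAt_id y).add_const _
  have h1 : fderiv ℝ (fun z : Fin 2 → ℝ => f (z + fun i => ((k i : ℤ) : ℝ))) y
      = fderiv ℝ f (y + fun i => ((k i : ℤ) : ℝ)) := by
    have h2 := ((hf _).hasFDerivAt.comp y hd).fderiv
    simpa [Function.comp_def] using h2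
  show fderiv ℝ f (y + fun i => ((k i : ℤ) : ℝ)) = fderiv ℝ f y
  rw [← h1, hcomp]

section taylor

variable {ξ : (Fin 2 → ℝ) → ℝ}

/-- Taylor's theorem with integral remainder along a segment. -/
lemma taylor_int (hξ : ContDiff ℝ (⊤ : ℕ∞) ξ) (x h : Fin 2 → ℝ) :
    ξ (x - h) - ξ x + fderiv ℝ ξ x h
      = ∫ s in (0:ℝ)..1, (1 - s) * (fderiv ℝ (fderiv ℝ ξ) (x - s • h) (-h) (-h)) := by
  have hξd : Differentiable ℝ ξ := hξ.differentiable (by simp)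
  have hΦ : ContDiff ℝ (⊤ : ℕ∞) (fderiv ℝ ξ) := hξ.fderiv_right top_add_one_le
  have hΦd : Differentiable ℝ (fderiv ℝ ξ) := hΦ.differentiable (by simp)
  have hΨ : ContDiff ℝ (⊤ : ℕ∞) (fderiv ℝ (fderiv ℝ ξ)) :=
    hΦ.fderiv_right top_add_one_le
  set Φ := fderiv ℝ ξ with hΦdef
  set Ψ := fderiv ℝ Φ with hΨdef
  have hγ : ∀ s : ℝ, HasDerivAt (fun s : ℝ => x - s • h) (-h) s := by
    intro s
    have := ((hasDerivAt_id s).smul_const h).const_sub x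
    simpa using this
  have hg : ∀ s : ℝ, HasDerivAt (fun s : ℝ => ξ (x - s • h)) (Φ (x - s • h) (-h)) s := by
    intro s
    exact (hξd _).hasFDerivAt.comp_hasDerivAt s (hγ s)
  have hg1 : ∀ s : ℝ, HasDerivAt (fun s : ℝ => Φ (x - s • h)) (Ψ (x - s • h) (-h)) s := by
    intro s
    exact (hΦd _).hasFDerivAt.comp_hasDerivAt s (hγ s)
  have hg1app : ∀ s : ℝ, HasDerivAt (fun s : ℝ => Φ (x - s • h) (-h))
      (Ψ (x - s • h) (-h) (-h)) s := by
    intro s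
    have := (hg1 s).clm_apply (hasDerivAt_const s (-h))
    simpa using this
  have hφ : ∀ s : ℝ, HasDerivAt (fun s : ℝ => ξ (x - s • h) + (1 - s) * Φ (x - s • h) (-h))
      ((1 - s) * (Ψ (x - s • h) (-h) (-h))) s := by
    intro s
    have h1 : HasDerivAt (fun s : ℝ => (1 : ℝ) - s) (-1) s := by
      simpa using (hasDerivAt_id s).const_sub 1
    have := (hg s).add (h1.mul (hg1app s))
    exact this.congr_deriv (by ring)
  have hcont : Continuous (fun s : ℝ => (1 - s) * (Ψ (x - s • h) (-h) (-h))) := by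
    have hc1 : Continuous fun s : ℝ => x - s • h := by continuity
    have hc2 : Continuous fun s : ℝ => Ψ (x - s • h) := hΨ.continuous.comp hc1
    exact (continuous_const.sub continuous_id).mul
      ((hc2.clm_apply continuous_const).clm_apply continuous_const)
  have := intervalIntegral.integral_eq_sub_of_hasDerivAt (f := fun s : ℝ =>
      ξ (x - s • h) + (1 - s) * Φ (x - s • h) (-h))
      (f' := fun s : ℝ => (1 - s) * (Ψ (x - s • h) (-h) (-h)))
      (fun t _ => hφ t) (hcont.intervalIntegrable 0 1)
  rw [this]
  simp only [one_smul, zero_smul, sub_zero]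
  rw [show Φ x (-h) = -(Φ x h) from map_neg _ _]
  ring

/-- the double sum in `Zfun` is the second derivative bilinear form. -/
lemma d2_sum_eq (hξ : ContDiff ℝ (⊤ : ℕ∞) ξ) (x h : Fin 2 → ℝ) (s : ℝ) :
    (∑ a, ∑ b, h a * h b * d2 ξ (x - s • h) a b) * (1 - s)
      = (1 - s) * (fderiv ℝ (fderiv ℝ ξ) (x - s • h) (-h) (-h)) := by
  have hΦ : ContDiff ℝ (⊤ : ℕ∞) (fderiv ℝ ξ) := hξ.fderiv_right top_add_one_le
  have hΦd : Differentiable ℝ (fderiv ℝ ξ) := hΦ.differentiable (by simp)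
  have key : ∀ (y : Fin 2 → ℝ) (a b : Fin 2),
      d2 ξ y a b = fderiv ℝ (fderiv ℝ ξ) y (Pi.single a 1) (Pi.single b 1) := by
    intro y a b
    unfold d2
    rw [fderiv_clm_apply (hΦd y) (differentiableAt_const _)]
    simp
  rw [bilin_expand (fderiv ℝ (fderiv ℝ ξ) (x - s • h)) (-h) (-h)]
  have : ∀ a b : Fin 2, (-h) a * (-h) b = h a * h b := by intro a b; simp
  rw [mul_comm]
  congr 1
  apply Finset.sum_congr rfl; intro a _
  apply Finset.sum_congr rfl; intro b _
  rw [key, this]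

/-- the phase `Z` is linear in `r`, with slope `c = λ(ξ(x-h) - ξ(x) + ∇ξ(x)·h)`. -/
lemma Zfun_eq (hξ : ContDiff ℝ (⊤ : ℕ∞) ξ) (lam : ℤ) (x h : Fin 2 → ℝ) (r : ℝ) :
    Zfun ξ lam r x h = r * ((lam : ℝ) * (ξ (x - h) - ξ x + fderiv ℝ ξ x h)) := by
  unfold Zfun
  rw [intervalIntegral.integral_congr (g := fun s =>
      (1 - s) * (fderiv ℝ (fderiv ℝ ξ) (x - s • h) (-h) (-h)))
      (fun s _ => d2_sum_eq hξ x h s)]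
  rw [taylor_int hξ x h]
  ring

end taylor

section main

variable (Kf : (Fin 2 → ℝ) → ℂ) (ξ : (Fin 2 → ℝ) → ℝ) (θ : (Fin 2 → ℝ) → ℂ)
  (lam : ℤ) (x : Fin 2 → ℝ)

/-- the slope of the phase in `ρ`. -/
def cP (h : Fin 2 → ℝ) : ℝ := (lam : ℝ) * (ξ (x - h) - ξ x + fderiv ℝ ξ x h)

/-- the fixed oscillatory prefactor. -/
def E1P (h : Fin 2 → ℝ) : ℂ :=
  Complex.exp (-(Complex.I * (lam : ℂ) * (∑ i, (gradv ξ x i : ℂ) * (h i : ℂ))))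

/-- the rewritten parametric integral. -/
def GP (ρ : ℝ) : ℂ :=
  ∫ h : Fin 2 → ℝ, E1P ξ lam x h *
    Complex.exp (Complex.I * ((ρ * cP ξ lam x h : ℝ) : ℂ)) * θ (x - ρ • h) * Kf h

/-- the `ρ`-derivative of the integrand. -/
def FderP (ρ : ℝ) (h : Fin 2 → ℝ) : ℂ :=
  (E1P ξ lam x h * (Complex.exp (Complex.I * ((ρ * cP ξ lam x h : ℝ) : ℂ)) *
      (Complex.I * ((cP ξ lam x h : ℝ) : ℂ))) * θ (x - ρ • h)
    + E1P ξ lam x h * Complex.exp (Complex.I * ((ρ * cP ξ lam x h : ℝ) : ℂ)) *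
      (fderiv ℝ θ (x - ρ • h) (-h))) * Kf h

/-- the candidate derivative of `GP`. -/
def GP' (ρ : ℝ) : ℂ := ∫ h : Fin 2 → ℝ, FderP Kf ξ θ lam x ρ h

lemma norm_exp_I_mul_real (r : ℝ) : ‖Complex.exp (Complex.I * (r : ℂ))‖ = 1 := by
  rw [mul_comm]; exact Complex.norm_exp_ofReal_mul_I r

lemma gradv_sum (h : Fin 2 → ℝ) :
    (∑ i, ((gradv ξ x i : ℝ) : ℂ) * ((h i : ℝ) : ℂ)) = ((fderiv ℝ ξ x h : ℝ) : ℂ) := by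
  rw [lin_expand (fderiv ℝ ξ x) h]
  push_cast
  apply Finset.sum_congr rfl; intro b _
  rw [mul_comm]; rfl

lemma norm_E1P (h : Fin 2 → ℝ) : ‖E1P ξ lam x h‖ = 1 := by
  unfold E1P
  rw [gradv_sum]
  rw [show -(Complex.I * (lam : ℂ) * ((fderiv ℝ ξ x h : ℝ) : ℂ))
      = Complex.I * ((-((lam : ℝ) * fderiv ℝ ξ x h) : ℝ) : ℂ) by push_cast; ring]
  exact norm_exp_I_mul_real _

lemma cP_continuous (hξ : ContDiff ℝ (⊤ : ℕ∞) ξ) : Continuous (cP ξ lam x) := by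
  unfold cP
  exact continuous_const.mul (((hξ.continuous.comp
    (continuous_const.sub continuous_id)).sub continuous_const).add (fderiv ℝ ξ x).continuous)

lemma E1P_continuous : Continuous (E1P ξ lam x) := by
  unfold E1P
  exact Complex.continuous_exp.comp (Continuous.neg (continuous_const.mul
    (continuous_finset_sum _ fun i _ =>
      (continuous_const.mul (Complex.continuous_ofReal.comp (continuous_apply i))))))

/-- bound `|c(h)| ≤ Mc ‖h‖²`. -/
lemma cP_bound (hξ : ContDiff ℝ (⊤ : ℕ∞) ξ) (hξper : ZPer ξ) :
    ∃ Mc : ℝ, 0 ≤ Mc ∧ ∀ h, |cP ξ lam x h| ≤ Mc * ‖h‖ ^ 2 := by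
  have hle : ((1 : ℕ∞) : WithTop ℕ∞) ≤ ((⊤ : ℕ∞) : WithTop ℕ∞) := by exact_mod_cast le_top
  have hξd : Differentiable ℝ ξ := hξ.differentiable (by simp)
  have hΦ : ContDiff ℝ (⊤ : ℕ∞) (fderiv ℝ ξ) := hξ.fderiv_right top_add_one_le
  have hΦd : Differentiable ℝ (fderiv ℝ ξ) := hΦ.differentiable (by simp)
  have hΨ : ContDiff ℝ (⊤ : ℕ∞) (fderiv ℝ (fderiv ℝ ξ)) :=
    hΦ.fderiv_right top_add_one_le
  have hper2 : ZPer (fun y => fderiv ℝ (fderiv ℝ ξ) y) :=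
    zper_fderiv hΦd (zper_fderiv hξd hξper)
  obtain ⟨M, hM0, hM⟩ := zper_bounded hΨ.continuous hper2
  refine ⟨|(lam : ℝ)| * M, by positivity, fun h => ?_⟩
  unfold cP
  rw [abs_mul]
  have key : |∫ s in (0:ℝ)..1, (1 - s) * (fderiv ℝ (fderiv ℝ ξ) (x - s • h) (-h) (-h))|
      ≤ (M * ‖h‖ ^ 2) * |1 - 0| := by
    rw [← Real.norm_eq_abs]
    apply intervalIntegral.norm_integral_le_of_norm_le_const
    intro s hs
    rw [Set.uIoc_of_le (by norm_num : (0:ℝ) ≤ 1)] at hs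
    have hs1 : |1 - s| ≤ 1 := by
      rw [abs_le]; constructor <;> [linarith [hs.2]; linarith [hs.1]]
    have h1 : ‖fderiv ℝ (fderiv ℝ ξ) (x - s • h) (-h) (-h)‖
        ≤ M * ‖h‖ ^ 2 := by
      calc ‖fderiv ℝ (fderiv ℝ ξ) (x - s • h) (-h) (-h)‖
          ≤ ‖fderiv ℝ (fderiv ℝ ξ) (x - s • h) (-h)‖ * ‖(-h)‖ :=
            ContinuousLinearMap.le_opNorm _ _
        _ ≤ (‖fderiv ℝ (fderiv ℝ ξ) (x - s • h)‖ * ‖(-h)‖) * ‖(-h)‖ := by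
            apply mul_le_mul_of_nonneg_right (ContinuousLinearMap.le_opNorm _ _) (norm_nonneg _)
        _ ≤ (M * ‖h‖) * ‖h‖ := by
            rw [norm_neg]
            apply mul_le_mul_of_nonneg_right _ (norm_nonneg _)
            exact mul_le_mul_of_nonneg_right (hM _) (norm_nonneg _)
        _ = M * ‖h‖ ^ 2 := by ring
    calc ‖(1 - s) * (fderiv ℝ (fderiv ℝ ξ) (x - s • h) (-h) (-h))‖
        = |1 - s| * ‖fderiv ℝ (fderiv ℝ ξ) (x - s • h) (-h) (-h)‖ := by
          rw [norm_mul]; rfl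
      _ ≤ 1 * (M * ‖h‖ ^ 2) := by
          apply mul_le_mul hs1 h1 (norm_nonneg _) zero_le_one
      _ = M * ‖h‖ ^ 2 := one_mul _
  have : |1 - (0:ℝ)| = 1 := by norm_num
  rw [this, mul_one] at key
  rw [taylor_int hξ x h]
  calc |(lam : ℝ)| * |∫ s in (0:ℝ)..1, (1 - s) * (fderiv ℝ (fderiv ℝ ξ) (x - s • h) (-h) (-h))|
      ≤ |(lam : ℝ)| * (M * ‖h‖ ^ 2) := mul_le_mul_of_nonneg_left key (abs_nonneg _)
    _ = |(lam : ℝ)| * M * ‖h‖ ^ 2 := by ring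

/-- pointwise differentiation of the integrand in `ρ`. -/
lemma hasDerivAt_integrand (hθ : ContDiff ℝ (⊤ : ℕ∞) θ) (ρ : ℝ) (h : Fin 2 → ℝ) :
    HasDerivAt (fun ρ : ℝ => E1P ξ lam x h *
      Complex.exp (Complex.I * ((ρ * cP ξ lam x h : ℝ) : ℂ)) * θ (x - ρ • h) * Kf h)
      (FderP Kf ξ θ lam x ρ h) ρ := by
  have hθd : Differentiable ℝ θ := hθ.differentiable (by simp)
  have hγ : HasDerivAt (fun ρ : ℝ => x - ρ • h) (-h) ρ := by
    simpa using ((hasDerivAt_id ρ).smul_const h).const_sub x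
  have h1 : HasDerivAt (fun ρ : ℝ => ((ρ * cP ξ lam x h : ℝ) : ℂ))
      ((cP ξ lam x h : ℝ) : ℂ) ρ := (hasDerivAt_mul_const _).ofReal_comp
  have h2 : HasDerivAt (fun ρ : ℝ => Complex.exp (Complex.I * ((ρ * cP ξ lam x h : ℝ) : ℂ)))
      (Complex.exp (Complex.I * ((ρ * cP ξ lam x h : ℝ) : ℂ)) *
        (Complex.I * ((cP ξ lam x h : ℝ) : ℂ))) ρ := (h1.const_mul Complex.I).cexp
  have h3 : HasDerivAt (fun ρ : ℝ => θ (x - ρ • h)) (fderiv ℝ θ (x - ρ • h) (-h)) ρ :=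
    (hθd _).hasFDerivAt.comp_hasDerivAt ρ hγ
  have h4 := ((h2.const_mul (E1P ξ lam x h)).mul h3).mul_const (Kf h)
  exact h4

/-- the uniform integrable bound for `FderP`. -/
lemma FderP_bound {Mc Mθ Mθ' : ℝ} (hMc : ∀ h, |cP ξ lam x h| ≤ Mc * ‖h‖ ^ 2)
    (hMθ : ∀ y, ‖θ y‖ ≤ Mθ) (hMθ' : ∀ y, ‖fderiv ℝ θ y‖ ≤ Mθ')
    (ρ : ℝ) (h : Fin 2 → ℝ) :
    ‖FderP Kf ξ θ lam x ρ h‖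
      ≤ (Mc * Mθ) * (‖h‖ ^ 2 * ‖Kf h‖) + Mθ' * (‖h‖ ^ 1 * ‖Kf h‖) := by
  have hMθ0 : 0 ≤ Mθ := le_trans (norm_nonneg _) (hMθ 0)
  have hMc0 : 0 ≤ Mc * ‖h‖ ^ 2 := le_trans (abs_nonneg _) (hMc h)
  unfold FderP
  rw [norm_mul]
  have e1 : ‖E1P ξ lam x h * (Complex.exp (Complex.I * ((ρ * cP ξ lam x h : ℝ) : ℂ)) *
      (Complex.I * ((cP ξ lam x h : ℝ) : ℂ))) * θ (x - ρ • h)‖ ≤ (Mc * ‖h‖ ^ 2) * Mθ := by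
    rw [norm_mul, norm_mul, norm_mul, norm_mul, norm_E1P, norm_exp_I_mul_real,
      Complex.norm_I, Complex.norm_real]
    simp only [one_mul]
    exact mul_le_mul (by simpa using hMc h) (hMθ _) (norm_nonneg _) hMc0
  have e2 : ‖E1P ξ lam x h * Complex.exp (Complex.I * ((ρ * cP ξ lam x h : ℝ) : ℂ)) *
      (fderiv ℝ θ (x - ρ • h) (-h))‖ ≤ Mθ' * ‖h‖ := by
    rw [norm_mul, norm_mul, norm_E1P, norm_exp_I_mul_real]
    simp only [one_mul]
    calc ‖fderiv ℝ θ (x - ρ • h) (-h)‖ ≤ ‖fderiv ℝ θ (x - ρ • h)‖ * ‖(-h)‖ :=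
          ContinuousLinearMap.le_opNorm _ _
      _ ≤ Mθ' * ‖h‖ := by
          rw [norm_neg]
          exact mul_le_mul_of_nonneg_right (hMθ' _) (norm_nonneg _)
  calc ‖E1P ξ lam x h * (Complex.exp (Complex.I * ((ρ * cP ξ lam x h : ℝ) : ℂ)) *
      (Complex.I * ((cP ξ lam x h : ℝ) : ℂ))) * θ (x - ρ • h)
    + E1P ξ lam x h * Complex.exp (Complex.I * ((ρ * cP ξ lam x h : ℝ) : ℂ)) *
      (fderiv ℝ θ (x - ρ • h) (-h))‖ * ‖Kf h‖
      ≤ ((Mc * ‖h‖ ^ 2) * Mθ + Mθ' * ‖h‖) * ‖Kf h‖ := by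
        apply mul_le_mul_of_nonneg_right _ (norm_nonneg _)
        exact le_trans (norm_add_le _ _) (add_le_add e1 e2)
    _ = (Mc * Mθ) * (‖h‖ ^ 2 * ‖Kf h‖) + Mθ' * (‖h‖ ^ 1 * ‖Kf h‖) := by ring


lemma E1P_exp_continuous (hξ : ContDiff ℝ (⊤ : ℕ∞) ξ) (ρ : ℝ) :
    Continuous (fun h => Complex.exp (Complex.I * ((ρ * cP ξ lam x h : ℝ) : ℂ))) :=
  Complex.continuous_exp.comp
    (continuous_const.mul (Complex.continuous_ofReal.comp (continuous_const.mul (cP_continuous ξ lam x hξ))))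

lemma theta_comp_continuous (hθ : ContDiff ℝ (⊤ : ℕ∞) θ) (ρ : ℝ) :
    Continuous (fun h : Fin 2 → ℝ => θ (x - ρ • h)) :=
  hθ.continuous.comp (continuous_const.sub (continuous_id.const_smul ρ))

lemma integrand_continuous_h (hξ : ContDiff ℝ (⊤ : ℕ∞) ξ) (hθ : ContDiff ℝ (⊤ : ℕ∞) θ)
    (hK : Continuous Kf) (ρ : ℝ) :
    Continuous (fun h => E1P ξ lam x h *
      Complex.exp (Complex.I * ((ρ * cP ξ lam x h : ℝ) : ℂ)) * θ (x - ρ • h) * Kf h) :=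
  (((E1P_continuous ξ lam x).mul (E1P_exp_continuous ξ lam x hξ ρ)).mul
    (theta_comp_continuous θ x hθ ρ)).mul hK

lemma FderP_continuous_h (hξ : ContDiff ℝ (⊤ : ℕ∞) ξ) (hθ : ContDiff ℝ (⊤ : ℕ∞) θ)
    (hK : Continuous Kf) (ρ : ℝ) :
    Continuous (fun h => FderP Kf ξ θ lam x ρ h) := by
  unfold FderP
  have hfd : Continuous fun h : Fin 2 → ℝ => fderiv ℝ θ (x - ρ • h) (-h) :=
    (((hθ.fderiv_right top_add_one_le).continuous.comp
      (continuous_const.sub (continuous_id.const_smul ρ))).clm_apply continuous_neg)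
  exact (((((E1P_continuous ξ lam x).mul ((E1P_exp_continuous ξ lam x hξ ρ).mul
      (continuous_const.mul
        (Complex.continuous_ofReal.comp (cP_continuous ξ lam x hξ))))).mul (theta_comp_continuous θ x hθ ρ)).add
    (((E1P_continuous ξ lam x).mul (E1P_exp_continuous ξ lam x hξ ρ)).mul hfd)).mul hK)

lemma FderP_continuous_rho (hθ : ContDiff ℝ (⊤ : ℕ∞) θ) (h : Fin 2 → ℝ) :
    Continuous (fun ρ : ℝ => FderP Kf ξ θ lam x ρ h) := by
  unfold FderP
  have hcurve : Continuous fun ρ : ℝ => x - ρ • h :=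
    continuous_const.sub (continuous_id.smul continuous_const)
  have hθ1 : ContDiff ℝ (⊤ : ℕ∞) (fderiv ℝ θ) := hθ.fderiv_right top_add_one_le
  have hexpρ : Continuous fun ρ : ℝ => Complex.exp (Complex.I * ((ρ * cP ξ lam x h : ℝ) : ℂ)) :=
    Complex.continuous_exp.comp
      (continuous_const.mul (Complex.continuous_ofReal.comp (continuous_id.mul continuous_const)))
  have hθρ : Continuous fun ρ : ℝ => θ (x - ρ • h) := hθ.continuous.comp hcurve
  have hfdρ : Continuous fun ρ : ℝ => fderiv ℝ θ (x - ρ • h) (-h) :=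
    ((hθ1.continuous.comp hcurve).clm_apply continuous_const)
  exact (((continuous_const.mul (hexpρ.mul continuous_const)).mul hθρ).add
    ((continuous_const.mul hexpρ).mul hfdρ)).mul continuous_const

lemma hasDerivAt_GP (KS : SchwartzMap (Fin 2 → ℝ) ℂ)
    (hξ : ContDiff ℝ (⊤ : ℕ∞) ξ) (hθ : ContDiff ℝ (⊤ : ℕ∞) θ)
    (hξper : ZPer ξ) (hθper : ZPer θ) (ρ₀ : ℝ) :
    HasDerivAt (GP (fun h => KS h) ξ θ lam x) (GP' (fun h => KS h) ξ θ lam x ρ₀) ρ₀ := by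
  have hθd : Differentiable ℝ θ := hθ.differentiable (by simp)
  obtain ⟨Mc, hMc0, hMc⟩ := cP_bound ξ lam x hξ hξper
  obtain ⟨Mθ, hMθ0, hMθ⟩ := zper_bounded hθ.continuous hθper
  have hθ1 : ContDiff ℝ (⊤ : ℕ∞) (fderiv ℝ θ) := hθ.fderiv_right top_add_one_le
  obtain ⟨Mθ', hMθ'0, hMθ'⟩ := zper_bounded hθ1.continuous (zper_fderiv hθd hθper)
  have hbint : Integrable (fun h : Fin 2 → ℝ =>
      (Mc * Mθ) * (‖h‖ ^ 2 * ‖KS h‖) + Mθ' * (‖h‖ ^ 1 * ‖KS h‖)) volume :=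
    ((KS.integrable_pow_mul volume 2).const_mul (Mc * Mθ)).add
      ((KS.integrable_pow_mul volume 1).const_mul Mθ')
  have hint : Integrable (fun h => E1P ξ lam x h *
      Complex.exp (Complex.I * ((ρ₀ * cP ξ lam x h : ℝ) : ℂ)) * θ (x - ρ₀ • h) * KS h)
      volume := by
    apply Integrable.mono' (KS.integrable.norm.const_mul Mθ)
      (integrand_continuous_h (fun h => KS h) ξ θ lam x hξ hθ KS.continuous ρ₀).aestronglyMeasurable
    refine Filter.Eventually.of_forall fun h => ?_
    rw [norm_mul, norm_mul, norm_mul, norm_E1P, norm_exp_I_mul_real]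
    simp only [one_mul]
    exact mul_le_mul_of_nonneg_right (hMθ _) (norm_nonneg _)
  have main := hasDerivAt_integral_of_dominated_loc_of_deriv_le
    (F := fun (ρ : ℝ) (h : Fin 2 → ℝ) => E1P ξ lam x h *
      Complex.exp (Complex.I * ((ρ * cP ξ lam x h : ℝ) : ℂ)) * θ (x - ρ • h) * KS h)
    (F' := fun (ρ : ℝ) (h : Fin 2 → ℝ) => FderP (fun h => KS h) ξ θ lam x ρ h)
    (x₀ := ρ₀)
    (bound := fun h => (Mc * Mθ) * (‖h‖ ^ 2 * ‖KS h‖) + Mθ' * (‖h‖ ^ 1 * ‖KS h‖))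
    (Metric.ball_mem_nhds ρ₀ one_pos)
    (Filter.Eventually.of_forall fun ρ =>
      (integrand_continuous_h (fun h => KS h) ξ θ lam x hξ hθ KS.continuous ρ).aestronglyMeasurable)
    hint
    ((FderP_continuous_h (fun h => KS h) ξ θ lam x hξ hθ KS.continuous ρ₀).aestronglyMeasurable)
    (Filter.Eventually.of_forall fun h ρ _ =>
      FderP_bound (fun h => KS h) ξ θ lam x hMc hMθ hMθ' ρ h)
    hbint
    (Filter.Eventually.of_forall fun h ρ _ =>
      hasDerivAt_integrand (fun h => KS h) ξ θ lam x hθ ρ h)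
  exact main.2

lemma GP'_continuous (KS : SchwartzMap (Fin 2 → ℝ) ℂ)
    (hξ : ContDiff ℝ (⊤ : ℕ∞) ξ) (hθ : ContDiff ℝ (⊤ : ℕ∞) θ)
    (hξper : ZPer ξ) (hθper : ZPer θ) :
    Continuous (GP' (fun h => KS h) ξ θ lam x) := by
  have hθd : Differentiable ℝ θ := hθ.differentiable (by simp)
  obtain ⟨Mc, hMc0, hMc⟩ := cP_bound ξ lam x hξ hξper
  obtain ⟨Mθ, hMθ0, hMθ⟩ := zper_bounded hθ.continuous hθper
  have hθ1 : ContDiff ℝ (⊤ : ℕ∞) (fderiv ℝ θ) := hθ.fderiv_right top_add_one_le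
  obtain ⟨Mθ', hMθ'0, hMθ'⟩ := zper_bounded hθ1.continuous (zper_fderiv hθd hθper)
  have hbint : Integrable (fun h : Fin 2 → ℝ =>
      (Mc * Mθ) * (‖h‖ ^ 2 * ‖KS h‖) + Mθ' * (‖h‖ ^ 1 * ‖KS h‖)) volume :=
    ((KS.integrable_pow_mul volume 2).const_mul (Mc * Mθ)).add
      ((KS.integrable_pow_mul volume 1).const_mul Mθ')
  apply continuous_of_dominated
    (bound := fun h => (Mc * Mθ) * (‖h‖ ^ 2 * ‖KS h‖) + Mθ' * (‖h‖ ^ 1 * ‖KS h‖))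
  · exact fun ρ =>
      (FderP_continuous_h (fun h => KS h) ξ θ lam x hξ hθ KS.continuous ρ).aestronglyMeasurable
  · exact fun ρ => Filter.Eventually.of_forall fun h =>
      FderP_bound (fun h => KS h) ξ θ lam x hMc hMθ hMθ' ρ h
  · exact hbint
  · exact Filter.Eventually.of_forall fun h =>
      FderP_continuous_rho (fun h => KS h) ξ θ lam x hθ h

lemma microlocalError_eq (hξ : ContDiff ℝ (⊤ : ℕ∞) ξ) :
    microlocalError Kf ξ θ lam x = ∫ r in (0:ℝ)..1, deriv (GP Kf ξ θ lam x) r := by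
  have hFG : (fun ρ : ℝ =>
      ∫ h : Fin 2 → ℝ,
        Complex.exp (-(Complex.I * (lam : ℂ) * (∑ i, (gradv ξ x i : ℂ) * (h i : ℂ)))) *
          Complex.exp (Complex.I * (Zfun ξ lam ρ x h : ℂ)) * θ (x - ρ • h) * Kf h)
      = GP Kf ξ θ lam x := by
    funext ρ
    unfold GP E1P
    congr 1
    funext h
    rw [Zfun_eq hξ lam x h ρ]
    rfl
  unfold microlocalError
  rw [hFG]

lemma GP_zero : GP Kf ξ θ lam x 0 = θ x * Khat Kf ((lam : ℝ) • gradv ξ x) := by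
  unfold GP Khat E1P
  rw [← integral_const_mul]
  congr 1; funext h
  have hsum : (∑ i, ((((lam : ℝ) • gradv ξ x) i : ℝ) : ℂ) * ((h i : ℝ) : ℂ))
      = (lam : ℂ) * ∑ i, ((gradv ξ x i : ℝ) : ℂ) * ((h i : ℝ) : ℂ) := by
    rw [Finset.mul_sum]
    apply Finset.sum_congr rfl; intro i _
    rw [Pi.smul_apply, smul_eq_mul]; push_cast; ring
  rw [hsum]
  simp only [zero_mul, Complex.ofReal_zero, mul_zero, Complex.exp_zero, mul_one, zero_smul,
    sub_zero]
  rw [show Complex.I * ((lam : ℂ) * ∑ i, ((gradv ξ x i : ℝ) : ℂ) * ((h i : ℝ) : ℂ))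
      = Complex.I * (lam : ℂ) * ∑ i, ((gradv ξ x i : ℝ) : ℂ) * ((h i : ℝ) : ℂ) from by ring]
  ring

lemma GP_one :
    Complex.exp (Complex.I * (lam : ℂ) * ((ξ x : ℝ) : ℂ)) * GP Kf ξ θ lam x 1
      = convOp Kf (fun y => Complex.exp (Complex.I * (lam : ℂ) * ((ξ y : ℝ) : ℂ)) * θ y) x := by
  unfold GP convOp E1P cP
  rw [← integral_const_mul]
  congr 1; funext h
  rw [gradv_sum]
  have hexp : Complex.exp (Complex.I * (lam : ℂ) * ((ξ x : ℝ) : ℂ)) *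
      (Complex.exp (-(Complex.I * (lam : ℂ) * ((fderiv ℝ ξ x h : ℝ) : ℂ))) *
        Complex.exp (Complex.I * (((1:ℝ) * ((lam : ℝ) *
          (ξ (x - h) - ξ x + fderiv ℝ ξ x h)) : ℝ) : ℂ)))
      = Complex.exp (Complex.I * (lam : ℂ) * ((ξ (x - h) : ℝ) : ℂ)) := by
    rw [← Complex.exp_add, ← Complex.exp_add]
    congr 1
    push_cast
    ring
  show Complex.exp (Complex.I * (lam : ℂ) * ((ξ x : ℝ) : ℂ)) *
      (Complex.exp (-(Complex.I * (lam : ℂ) * ((fderiv ℝ ξ x h : ℝ) : ℂ))) *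
        Complex.exp (Complex.I * (((1:ℝ) * ((lam : ℝ) *
          (ξ (x - h) - ξ x + fderiv ℝ ξ x h)) : ℝ) : ℂ)) * θ (x - (1:ℝ) • h) * Kf h)
      = Complex.exp (Complex.I * (lam : ℂ) * ((ξ (x - h) : ℝ) : ℂ)) * θ (x - h) * Kf h
  rw [one_smul, ← hexp]
  ring

end main

theorem microlocal_lemma
    (K : SchwartzMap (Fin 2 → ℝ) ℂ)
    (ξ : (Fin 2 → ℝ) → ℝ) (θ : (Fin 2 → ℝ) → ℂ)
    (hξ : ContDiff ℝ (⊤ : ℕ∞) ξ) (hθ : ContDiff ℝ (⊤ : ℕ∞) θ)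
    (hξper : ZPer ξ) (hθper : ZPer θ)
    (lam : ℤ) (x : Fin 2 → ℝ) :
    convOp (fun h => K h) (fun y => Complex.exp (Complex.I * (lam : ℂ) * (ξ y : ℂ)) * θ y) x
      = Complex.exp (Complex.I * (lam : ℂ) * (ξ x : ℂ)) *
          (θ x * Khat (fun h => K h) ((lam : ℝ) • gradv ξ x)
            + microlocalError (fun h => K h) ξ θ lam x) := by
  have hder := fun r => hasDerivAt_GP ξ θ lam x K hξ hθ hξper hθper r
  have herr : microlocalError (fun h => (K h : ℂ)) ξ θ lam x
      = GP (fun h => (K h : ℂ)) ξ θ lam x 1 - GP (fun h => (K h : ℂ)) ξ θ lam x 0 := by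
    rw [microlocalError_eq (fun h => (K h : ℂ)) ξ θ lam x hξ]
    rw [intervalIntegral.integral_congr
      (g := GP' (fun h => (K h : ℂ)) ξ θ lam x) (fun r _ => (hder r).deriv)]
    exact intervalIntegral.integral_eq_sub_of_hasDerivAt (fun r _ => hder r)
      ((GP'_continuous ξ θ lam x K hξ hθ hξper hθper).intervalIntegrable 0 1)
  rw [herr, ← GP_zero (fun h => (K h : ℂ)) ξ θ lam x,
    ← GP_one (fun h => (K h : ℂ)) ξ θ lam x]
  ring
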